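/- Let A ∈ R^{m×N} have entries A_{j,k} = ±1 and satisfy (a) |∑_{j=1}^m A_{j,k}A_{j,k'}| ≤ κ√m for all distinct k, k' ∈ [1:N], and (b) |∑_{j=1}^m A_{j,k}A_{j,k'}A_{j,ℓ}A_{j,ℓ'}| ≤ κ√m for all distinct k, k', ℓ, ℓ' ∈ [1:N]. Then for any δ ∈ (0,1), as soon as m ≥ κ² δ^{−2} s⁴, there exist α, β > 0 with β/α ≤ √3 ((1+δ)/(1−δ))^{3/2} such that α m ||x||_2 ≤ ||Ax||_1 ≤ β m ||x||_2 for all s-sparse x ∈ R^N; explicitly one can take α = ((1−δ)³/(3(1+δ)))^{1/2} and β = (1+δ)^{1/2}. -/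

import Mathlib

section stmt10aux

variable {m N : ℕ} (A : Matrix (Fin m) (Fin N) ℝ)

lemma stmt10_sq (hA : ∀ j k, A j k = 1 ∨ A j k = -1) (j : Fin m) (k : Fin N) :
    A j k * A j k = 1 := by rcases hA j k with h | h <;> rw [h] <;> norm_num

lemma stmt10_swap5 (F : Fin m → Fin N → Fin N → Fin N → Fin N → ℝ) :
    ∑ j, ∑ a, ∑ b, ∑ c, ∑ d, F j a b c d = ∑ a, ∑ b, ∑ c, ∑ d, ∑ j, F j a b c d := by
  rw [Finset.sum_comm]
  refine Finset.sum_congr rfl fun a _ => ?_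
  rw [Finset.sum_comm]
  refine Finset.sum_congr rfl fun b _ => ?_
  rw [Finset.sum_comm]
  refine Finset.sum_congr rfl fun c _ => ?_
  rw [Finset.sum_comm]

lemma stmt10_expand2 (x : Fin N → ℝ) :
    ∑ j, (A.mulVec x j) ^ 2 = ∑ a, ∑ b, x a * x b * ∑ j, A j a * A j b := by
  have h : ∀ j, A.mulVec x j = ∑ k, A j k * x k := fun j => by
    simp [Matrix.mulVec, dotProduct]
  simp_rw [h, sq, Finset.sum_mul_sum]
  rw [Finset.sum_comm]
  refine Finset.sum_congr rfl fun a _ => ?_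
  rw [Finset.sum_comm]
  refine Finset.sum_congr rfl fun b _ => ?_
  rw [Finset.mul_sum]
  exact Finset.sum_congr rfl fun j _ => by ring

lemma stmt10_expand4 (x : Fin N → ℝ) :
    ∑ j, (A.mulVec x j) ^ 4 =
      ∑ a, ∑ b, ∑ c, ∑ d, x a * x b * x c * x d * ∑ j, A j a * A j b * A j c * A j d := by
  have h : ∀ j, A.mulVec x j = ∑ k, A j k * x k := fun j => by
    simp [Matrix.mulVec, dotProduct]
  have h4 : ∀ y : ℝ, y ^ 4 = y ^ 2 * y ^ 2 := fun y => by ring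
  simp_rw [h, h4, sq, Finset.sum_mul_sum]
  rw [stmt10_swap5]
  refine Finset.sum_congr rfl fun a _ => ?_
  rw [Finset.sum_comm]
  refine Finset.sum_congr rfl fun b _ => Finset.sum_congr rfl fun c _ =>
    Finset.sum_congr rfl fun d _ => ?_
  rw [Finset.mul_sum]
  exact Finset.sum_congr rfl fun j _ => by ring

lemma stmt10_sum_pow_four (f : Fin N → ℝ) :
    (∑ k, f k) ^ 4 = ∑ a, ∑ b, ∑ c, ∑ d, f a * f b * f c * f d := by
  have h4 : (∑ k, f k) ^ 4 = (∑ k, f k)^2 * (∑ k, f k)^2 := by ring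
  simp_rw [h4, sq, Finset.sum_mul_sum]
  refine Finset.sum_congr rfl fun a _ => ?_
  rw [Finset.sum_comm]
  exact Finset.sum_congr rfl fun b _ => Finset.sum_congr rfl fun c _ =>
    Finset.sum_congr rfl fun d _ => by ring

lemma stmt10_T_diag (hA : ∀ j k, A j k = 1 ∨ A j k = -1) (a b c d : Fin N)
    (h : (a = b ∧ c = d) ∨ (a = c ∧ b = d) ∨ (a = d ∧ b = c)) :
    ∑ j, A j a * A j b * A j c * A j d = (m : ℝ) := by
  have key : ∀ j, A j a * A j b * A j c * A j d = 1 := by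
    intro j
    rcases h with ⟨h1, h2⟩ | ⟨h1, h2⟩ | ⟨h1, h2⟩ <;> subst h1 <;> subst h2 <;>
      [ (calc A j a * A j a * A j c * A j c = (A j a * A j a) * (A j c * A j c) := by ring
          _ = 1 := by rw [stmt10_sq A hA, stmt10_sq A hA]; norm_num);
        (calc A j a * A j b * A j a * A j b = (A j a * A j a) * (A j b * A j b) := by ring
          _ = 1 := by rw [stmt10_sq A hA, stmt10_sq A hA]; norm_num);
        (calc A j a * A j b * A j b * A j a = (A j a * A j a) * (A j b * A j b) := by ring
          _ = 1 := by rw [stmt10_sq A hA, stmt10_sq A hA]; norm_num)]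
  simp [key]

lemma stmt10_T_offdiag {κ : ℝ} (hA : ∀ j k, A j k = 1 ∨ A j k = -1)
    (ha : ∀ k k' : Fin N, k ≠ k' → |∑ j, A j k * A j k'| ≤ κ * Real.sqrt m)
    (hb : ∀ k k' l l' : Fin N, k ≠ k' → k ≠ l → k ≠ l' → k' ≠ l → k' ≠ l' → l ≠ l' →
      |∑ j, A j k * A j k' * A j l * A j l'| ≤ κ * Real.sqrt m)
    (a b c d : Fin N)
    (h : ¬((a = b ∧ c = d) ∨ (a = c ∧ b = d) ∨ (a = d ∧ b = c))) :
    |∑ j, A j a * A j b * A j c * A j d| ≤ κ * Real.sqrt m := by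
  push_neg at h
  obtain ⟨h1, h2, h3⟩ := h
  by_cases hab : a = b
  · have hcd : c ≠ d := h1 hab
    subst hab
    have : ∑ j, A j a * A j a * A j c * A j d = ∑ j, A j c * A j d :=
      Finset.sum_congr rfl fun j _ => by
        calc A j a * A j a * A j c * A j d = (A j a * A j a) * (A j c * A j d) := by ring
          _ = A j c * A j d := by rw [stmt10_sq A hA]; ring
    rw [this]; exact ha c d hcd
  by_cases hac : a = c
  · have hbd : b ≠ d := h2 hac
    subst hac
    have : ∑ j, A j a * A j b * A j a * A j d = ∑ j, A j b * A j d :=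
      Finset.sum_congr rfl fun j _ => by
        calc A j a * A j b * A j a * A j d = (A j a * A j a) * (A j b * A j d) := by ring
          _ = A j b * A j d := by rw [stmt10_sq A hA]; ring
    rw [this]; exact ha b d hbd
  by_cases had : a = d
  · have hbc : b ≠ c := h3 had
    subst had
    have : ∑ j, A j a * A j b * A j c * A j a = ∑ j, A j b * A j c :=
      Finset.sum_congr rfl fun j _ => by
        calc A j a * A j b * A j c * A j a = (A j a * A j a) * (A j b * A j c) := by ring
          _ = A j b * A j c := by rw [stmt10_sq A hA]; ring
    rw [this]; exact ha b c hbc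
  by_cases hbc : b = c
  · subst hbc
    have : ∑ j, A j a * A j b * A j b * A j d = ∑ j, A j a * A j d :=
      Finset.sum_congr rfl fun j _ => by
        calc A j a * A j b * A j b * A j d = (A j b * A j b) * (A j a * A j d) := by ring
          _ = A j a * A j d := by rw [stmt10_sq A hA]; ring
    rw [this]; exact ha a d had
  by_cases hbd : b = d
  · subst hbd
    have : ∑ j, A j a * A j b * A j c * A j b = ∑ j, A j a * A j c :=
      Finset.sum_congr rfl fun j _ => by
        calc A j a * A j b * A j c * A j b = (A j b * A j b) * (A j a * A j c) := by ring
          _ = A j a * A j c := by rw [stmt10_sq A hA]; ring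
    rw [this]; exact ha a c hac
  by_cases hcd : c = d
  · subst hcd
    have : ∑ j, A j a * A j b * A j c * A j c = ∑ j, A j a * A j b :=
      Finset.sum_congr rfl fun j _ => by
        calc A j a * A j b * A j c * A j c = (A j c * A j c) * (A j a * A j b) := by ring
          _ = A j a * A j b := by rw [stmt10_sq A hA]; ring
    rw [this]; exact ha a b hab
  exact hb a b c d hab hac had hbc hbd hcd

end stmt10aux

lemma stmt10_ite_nonneg (c : Prop) [Decidable c] (v : ℝ) (hv : 0 ≤ v) :
    (0:ℝ) ≤ if c then v else 0 := by split_ifs <;> simp [hv]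

lemma stmt10_prod {N : ℕ} (f : Fin N → Fin N → Fin N → Fin N → ℝ) :
    ∑ p : Fin N × Fin N × Fin N × Fin N, f p.1 p.2.1 p.2.2.1 p.2.2.2
      = ∑ a, ∑ b, ∑ c, ∑ d, f a b c d := by
  simp [Fintype.sum_prod_type]

lemma stmt10_pair1 {N : ℕ} (x : Fin N → ℝ) :
    ∑ a, ∑ b, ∑ c, ∑ d, (if a = b ∧ c = d then x a^2 * x c^2 else 0) = (∑ k, x k^2)^2 := by
  simp [ite_and, Finset.sum_ite_eq, Finset.sum_ite_eq', sq, Finset.sum_mul_sum]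

lemma stmt10_pair2 {N : ℕ} (x : Fin N → ℝ) :
    ∑ a, ∑ b, ∑ c, ∑ d, (if a = c ∧ b = d then x a^2 * x b^2 else 0) = (∑ k, x k^2)^2 := by
  simp [ite_and, Finset.sum_ite_eq, Finset.sum_ite_eq', sq, Finset.sum_mul_sum]

lemma stmt10_pair3 {N : ℕ} (x : Fin N → ℝ) :
    ∑ a, ∑ b, ∑ c, ∑ d, (if a = d ∧ b = c then x a^2 * x b^2 else 0) = (∑ k, x k^2)^2 := by
  simp [ite_and, Finset.sum_ite_eq, Finset.sum_ite_eq', sq, Finset.sum_mul_sum]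

lemma stmt10_Q4 {m N : ℕ} (A : Matrix (Fin m) (Fin N) ℝ)
    (hA : ∀ j k, A j k = 1 ∨ A j k = -1) {κ : ℝ} (hκ : 0 ≤ κ)
    (ha : ∀ k k' : Fin N, k ≠ k' → |∑ j, A j k * A j k'| ≤ κ * Real.sqrt m)
    (hb : ∀ k k' l l' : Fin N, k ≠ k' → k ≠ l → k ≠ l' → k' ≠ l → k' ≠ l' → l ≠ l' →
      |∑ j, A j k * A j k' * A j l * A j l'| ≤ κ * Real.sqrt m)
    (x : Fin N → ℝ) :
    ∑ j, (A.mulVec x j)^4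
      ≤ 3 * ((m:ℝ) * (∑ k, x k^2)^2) + κ * Real.sqrt m * (∑ k, |x k|)^4 := by
  have e2 : ∑ j, (A.mulVec x j) ^ 4 = ∑ p : Fin N × Fin N × Fin N × Fin N,
      x p.1 * x p.2.1 * x p.2.2.1 * x p.2.2.2 *
        ∑ j, A j p.1 * A j p.2.1 * A j p.2.2.1 * A j p.2.2.2 := by
    rw [stmt10_expand4 A x,
      stmt10_prod (fun a b c d => x a * x b * x c * x d * ∑ j, A j a * A j b * A j c * A j d)]
  rw [e2, ← Finset.sum_filter_add_sum_filter_not Finset.univ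
    (fun p : Fin N × Fin N × Fin N × Fin N =>
      (p.1 = p.2.1 ∧ p.2.2.1 = p.2.2.2) ∨ (p.1 = p.2.2.1 ∧ p.2.1 = p.2.2.2) ∨
      (p.1 = p.2.2.2 ∧ p.2.1 = p.2.2.1))]
  have part1 : ∑ p ∈ Finset.univ.filter (fun p : Fin N × Fin N × Fin N × Fin N =>
      (p.1 = p.2.1 ∧ p.2.2.1 = p.2.2.2) ∨ (p.1 = p.2.2.1 ∧ p.2.1 = p.2.2.2) ∨
      (p.1 = p.2.2.2 ∧ p.2.1 = p.2.2.1)),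
      x p.1 * x p.2.1 * x p.2.2.1 * x p.2.2.2 *
        ∑ j, A j p.1 * A j p.2.1 * A j p.2.2.1 * A j p.2.2.2
      ≤ 3 * ((m:ℝ) * (∑ k, x k^2)^2) := by
    rw [Finset.sum_filter]
    have point : ∀ p : Fin N × Fin N × Fin N × Fin N,
        (if (p.1 = p.2.1 ∧ p.2.2.1 = p.2.2.2) ∨ (p.1 = p.2.2.1 ∧ p.2.1 = p.2.2.2) ∨
            (p.1 = p.2.2.2 ∧ p.2.1 = p.2.2.1) then
          x p.1 * x p.2.1 * x p.2.2.1 * x p.2.2.2 *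
            ∑ j, A j p.1 * A j p.2.1 * A j p.2.2.1 * A j p.2.2.2 else 0)
        ≤ (m:ℝ) *
          ((if p.1 = p.2.1 ∧ p.2.2.1 = p.2.2.2 then x p.1^2 * x p.2.2.1^2 else 0)
          + (if p.1 = p.2.2.1 ∧ p.2.1 = p.2.2.2 then x p.1^2 * x p.2.1^2 else 0)
          + (if p.1 = p.2.2.2 ∧ p.2.1 = p.2.2.1 then x p.1^2 * x p.2.1^2 else 0)) := by
      rintro ⟨a, b, c, d⟩
      dsimp only
      have hm0 : (0:ℝ) ≤ m := Nat.cast_nonneg m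
      by_cases hp : (a = b ∧ c = d) ∨ (a = c ∧ b = d) ∨ (a = d ∧ b = c)
      · rw [if_pos hp, stmt10_T_diag A hA a b c d hp]
        rcases hp with ⟨h1, h2⟩ | ⟨h1, h2⟩ | ⟨h1, h2⟩
        · subst h1; subst h2
          rw [if_pos (⟨rfl, rfl⟩ : a = a ∧ c = c)]
          have i2 : (0:ℝ) ≤ if a = c ∧ a = c then x a^2 * x a^2 else 0 :=
            stmt10_ite_nonneg _ _ (by positivity)
          have i3 : (0:ℝ) ≤ if a = c ∧ a = c then x a^2 * x a^2 else 0 :=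
            stmt10_ite_nonneg _ _ (by positivity)
          nlinarith [mul_nonneg hm0 (stmt10_ite_nonneg (a = c ∧ a = c) (x a^2 * x a^2) (by positivity)),
            mul_nonneg hm0 (stmt10_ite_nonneg (a = c ∧ a = c) (x a^2 * x a^2) (by positivity))]
        · subst h1; subst h2
          rw [if_pos (⟨rfl, rfl⟩ : a = a ∧ b = b)]
          nlinarith [mul_nonneg hm0 (stmt10_ite_nonneg (a = b ∧ a = b) (x a^2 * x a^2) (by positivity)),
            mul_nonneg hm0 (stmt10_ite_nonneg (a = b ∧ b = a) (x a^2 * x b^2) (by positivity))]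
        · subst h1; subst h2
          rw [if_pos (⟨rfl, rfl⟩ : a = a ∧ b = b)]
          nlinarith [mul_nonneg hm0 (stmt10_ite_nonneg (a = b ∧ b = a) (x a^2 * x b^2) (by positivity)),
            mul_nonneg hm0 (stmt10_ite_nonneg (a = a ∧ b = b) (x a^2 * x b^2) (by positivity))]
      · rw [if_neg hp]
        have i1 : (0:ℝ) ≤ if a = b ∧ c = d then x a^2 * x c^2 else 0 :=
          stmt10_ite_nonneg _ _ (by positivity)
        have i2 : (0:ℝ) ≤ if a = c ∧ b = d then x a^2 * x b^2 else 0 :=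
          stmt10_ite_nonneg _ _ (by positivity)
        have i3 : (0:ℝ) ≤ if a = d ∧ b = c then x a^2 * x b^2 else 0 :=
          stmt10_ite_nonneg _ _ (by positivity)
        nlinarith [mul_nonneg hm0 i1, mul_nonneg hm0 i2, mul_nonneg hm0 i3]
    calc ∑ p : Fin N × Fin N × Fin N × Fin N,
        (if (p.1 = p.2.1 ∧ p.2.2.1 = p.2.2.2) ∨ (p.1 = p.2.2.1 ∧ p.2.1 = p.2.2.2) ∨
            (p.1 = p.2.2.2 ∧ p.2.1 = p.2.2.1) then
          x p.1 * x p.2.1 * x p.2.2.1 * x p.2.2.2 *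
            ∑ j, A j p.1 * A j p.2.1 * A j p.2.2.1 * A j p.2.2.2 else 0)
        ≤ ∑ p : Fin N × Fin N × Fin N × Fin N, (m:ℝ) *
          ((if p.1 = p.2.1 ∧ p.2.2.1 = p.2.2.2 then x p.1^2 * x p.2.2.1^2 else 0)
          + (if p.1 = p.2.2.1 ∧ p.2.1 = p.2.2.2 then x p.1^2 * x p.2.1^2 else 0)
          + (if p.1 = p.2.2.2 ∧ p.2.1 = p.2.2.1 then x p.1^2 * x p.2.1^2 else 0)) :=
          Finset.sum_le_sum fun p _ => point p
      _ = 3 * ((m:ℝ) * (∑ k, x k^2)^2) := by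
          rw [← Finset.mul_sum, Finset.sum_add_distrib, Finset.sum_add_distrib,
            stmt10_prod (fun a b c d => if a = b ∧ c = d then x a^2 * x c^2 else 0),
            stmt10_prod (fun a b c d => if a = c ∧ b = d then x a^2 * x b^2 else 0),
            stmt10_prod (fun a b c d => if a = d ∧ b = c then x a^2 * x b^2 else 0),
            stmt10_pair1, stmt10_pair2, stmt10_pair3]
          ring
  have part2 : ∑ p ∈ Finset.univ.filter (fun p : Fin N × Fin N × Fin N × Fin N =>
      ¬((p.1 = p.2.1 ∧ p.2.2.1 = p.2.2.2) ∨ (p.1 = p.2.2.1 ∧ p.2.1 = p.2.2.2) ∨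
      (p.1 = p.2.2.2 ∧ p.2.1 = p.2.2.1))),
      x p.1 * x p.2.1 * x p.2.2.1 * x p.2.2.2 *
        ∑ j, A j p.1 * A j p.2.1 * A j p.2.2.1 * A j p.2.2.2
      ≤ κ * Real.sqrt m * (∑ k, |x k|)^4 := by
    set Pn := Finset.univ.filter (fun p : Fin N × Fin N × Fin N × Fin N =>
      ¬((p.1 = p.2.1 ∧ p.2.2.1 = p.2.2.2) ∨ (p.1 = p.2.2.1 ∧ p.2.1 = p.2.2.2) ∨
      (p.1 = p.2.2.2 ∧ p.2.1 = p.2.2.1))) with hPn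
    calc ∑ p ∈ Pn, x p.1 * x p.2.1 * x p.2.2.1 * x p.2.2.2 *
          ∑ j, A j p.1 * A j p.2.1 * A j p.2.2.1 * A j p.2.2.2
        ≤ |∑ p ∈ Pn, x p.1 * x p.2.1 * x p.2.2.1 * x p.2.2.2 *
          ∑ j, A j p.1 * A j p.2.1 * A j p.2.2.1 * A j p.2.2.2| := le_abs_self _
      _ ≤ ∑ p ∈ Pn, |x p.1 * x p.2.1 * x p.2.2.1 * x p.2.2.2 *
          ∑ j, A j p.1 * A j p.2.1 * A j p.2.2.1 * A j p.2.2.2| :=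
          Finset.abs_sum_le_sum_abs _ _
      _ ≤ ∑ p ∈ Pn, |x p.1| * |x p.2.1| * |x p.2.2.1| * |x p.2.2.2| * (κ * Real.sqrt m) := by
          refine Finset.sum_le_sum fun p hp => ?_
          have hnp := (Finset.mem_filter.mp (hPn ▸ hp)).2
          rw [abs_mul, abs_mul, abs_mul, abs_mul]
          exact mul_le_mul_of_nonneg_left
            (stmt10_T_offdiag A hA ha hb p.1 p.2.1 p.2.2.1 p.2.2.2 hnp) (by positivity)
      _ ≤ ∑ p : Fin N × Fin N × Fin N × Fin N,
            |x p.1| * |x p.2.1| * |x p.2.2.1| * |x p.2.2.2| * (κ * Real.sqrt m) := by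
          refine Finset.sum_le_sum_of_subset_of_nonneg (hPn ▸ Finset.filter_subset _ _)
            fun p _ _ => by positivity
      _ = κ * Real.sqrt m * (∑ k, |x k|)^4 := by
          rw [stmt10_prod (fun a b c d => |x a| * |x b| * |x c| * |x d| * (κ * Real.sqrt m))]
          simp_rw [← Finset.sum_mul]
          rw [← stmt10_sum_pow_four]
          ring
  linarith

lemma stmt10_Q2 {m N : ℕ} (A : Matrix (Fin m) (Fin N) ℝ)
    (hA : ∀ j k, A j k = 1 ∨ A j k = -1) {κ : ℝ}
    (hκ : 0 ≤ κ)
    (ha : ∀ k k' : Fin N, k ≠ k' → |∑ j, A j k * A j k'| ≤ κ * Real.sqrt m)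
    (x : Fin N → ℝ) :
    |∑ j, (A.mulVec x j)^2 - m * ∑ k, x k^2| ≤ κ * Real.sqrt m * (∑ k, |x k|)^2 := by
  have hsq : ∀ (j : Fin m) (k : Fin N), A j k * A j k = 1 := fun j k => by
    rcases hA j k with h | h <;> rw [h] <;> norm_num
  have e1 : ∑ j, (A.mulVec x j) ^ 2 = ∑ a, ∑ b, x a * x b * ∑ j, A j a * A j b := by
    have h : ∀ j, A.mulVec x j = ∑ k, A j k * x k := fun j => by
      simp [Matrix.mulVec, dotProduct]
    simp_rw [h, sq, Finset.sum_mul_sum]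
    rw [Finset.sum_comm]
    refine Finset.sum_congr rfl fun a _ => ?_
    rw [Finset.sum_comm]
    refine Finset.sum_congr rfl fun b _ => ?_
    rw [Finset.mul_sum]
    exact Finset.sum_congr rfl fun j _ => by ring
  have hdiag : ∀ a : Fin N, ∑ j, A j a * A j a = (m:ℝ) := fun a => by simp [hsq]
  have e2 : ∑ j, (A.mulVec x j) ^ 2
      = (m:ℝ) * (∑ k, x k^2)
        + ∑ a, ∑ b ∈ Finset.univ.erase a, x a * x b * ∑ j, A j a * A j b := by
    rw [e1]
    have step : ∀ a : Fin N, ∑ b, x a * x b * ∑ j, A j a * A j b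
        = x a * x a * (m:ℝ) + ∑ b ∈ Finset.univ.erase a, x a * x b * ∑ j, A j a * A j b := by
      intro a
      rw [← Finset.add_sum_erase Finset.univ _ (Finset.mem_univ a), hdiag a]
    simp_rw [step]
    rw [Finset.sum_add_distrib]
    congr 1
    rw [Finset.mul_sum]
    exact Finset.sum_congr rfl fun a _ => by ring
  rw [e2, add_sub_cancel_left]
  calc |∑ a, ∑ b ∈ Finset.univ.erase a, x a * x b * ∑ j, A j a * A j b|
      ≤ ∑ a, |∑ b ∈ Finset.univ.erase a, x a * x b * ∑ j, A j a * A j b| :=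
        Finset.abs_sum_le_sum_abs _ _
    _ ≤ ∑ a, ∑ b ∈ Finset.univ.erase a, |x a * x b * ∑ j, A j a * A j b| :=
        Finset.sum_le_sum fun a _ => Finset.abs_sum_le_sum_abs _ _
    _ ≤ ∑ a, ∑ b ∈ Finset.univ.erase a, |x a| * |x b| * (κ * Real.sqrt m) := by
        refine Finset.sum_le_sum fun a _ => Finset.sum_le_sum fun b hb => ?_
        rw [abs_mul, abs_mul]
        exact mul_le_mul_of_nonneg_left
          (ha a b (Ne.symm (Finset.mem_erase.mp hb).1)) (by positivity)
    _ ≤ ∑ a, ∑ b, |x a| * |x b| * (κ * Real.sqrt m) := by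
        refine Finset.sum_le_sum fun a _ => ?_
        refine Finset.sum_le_sum_of_subset_of_nonneg (Finset.erase_subset _ _)
          fun b _ _ => ?_
        positivity
    _ = κ * Real.sqrt m * (∑ k, |x k|)^2 := by
        simp_rw [← Finset.sum_mul]
        rw [sq, ← Finset.sum_mul_sum]
        ring

set_option maxHeartbeats 1000000 in
/-- Main theorem: a `±1` matrix satisfying conditions (a) and (b) with `m ≥ κ² δ⁻² s⁴`
provides an `ℓ₂ → ℓ₁` restricted isometry on `s`-sparse vectors,
`α m ‖x‖₂ ≤ ‖Ax‖₁ ≤ β m ‖x‖₂`, with distortion `β/α ≤ √3 ((1+δ)/(1-δ))^{3/2}`;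
explicitly `α = ((1-δ)³/(3(1+δ)))^{1/2}` and `β = (1+δ)^{1/2}`. -/
theorem stmt10 (m N s : ℕ) (κ δ : ℝ) (hκ : 0 < κ) (hδ : δ ∈ Set.Ioo (0 : ℝ) 1)
    (A : Matrix (Fin m) (Fin N) ℝ) (hA : ∀ j k, A j k = 1 ∨ A j k = -1)
    (ha : ∀ k k' : Fin N, k ≠ k' → |∑ j, A j k * A j k'| ≤ κ * Real.sqrt m)
    (hb : ∀ k k' l l' : Fin N, k ≠ k' → k ≠ l → k ≠ l' → k' ≠ l → k' ≠ l' → l ≠ l' →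
      |∑ j, A j k * A j k' * A j l * A j l'| ≤ κ * Real.sqrt m)
    (hm : (m : ℝ) ≥ κ ^ 2 / δ ^ 2 * s ^ 4) :
    ∃ α β : ℝ, 0 < α ∧ 0 < β ∧
      α = ((1 - δ) ^ 3 / (3 * (1 + δ))) ^ ((1 : ℝ) / 2) ∧
      β = (1 + δ) ^ ((1 : ℝ) / 2) ∧
      β / α ≤ Real.sqrt 3 * ((1 + δ) / (1 - δ)) ^ ((3 : ℝ) / 2) ∧
      ∀ x : Fin N → ℝ, {k | x k ≠ 0}.ncard ≤ s →
        α * m * Real.sqrt (∑ k, x k ^ 2) ≤ ∑ j, |A.mulVec x j| ∧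
        ∑ j, |A.mulVec x j| ≤ β * m * Real.sqrt (∑ k, x k ^ 2) := by
  obtain ⟨hδ0, hδ1⟩ := hδ
  have h1δ : (0:ℝ) < 1 - δ := by linarith
  have h1δ' : (0:ℝ) < 1 + δ := by linarith
  have hbpos : (0:ℝ) < (1 - δ)^3 / (3 * (1 + δ)) := by positivity
  refine ⟨Real.sqrt ((1 - δ)^3 / (3 * (1 + δ))), Real.sqrt (1 + δ),
    Real.sqrt_pos.mpr hbpos, Real.sqrt_pos.mpr h1δ', Real.sqrt_eq_rpow _,
    Real.sqrt_eq_rpow _, ?_, ?_⟩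
  · -- distortion bound
    have hr0 : (0:ℝ) ≤ (1 + δ) / (1 - δ) := by positivity
    have hrw : ((1 + δ) / (1 - δ)) ^ ((3:ℝ)/2) = Real.sqrt (((1 + δ) / (1 - δ))^3) := by
      rw [show ((3:ℝ)/2) = (3:ℝ) * (1/2) by norm_num, Real.rpow_mul hr0,
        ← Real.sqrt_eq_rpow, show ((3:ℝ)) = ((3:ℕ):ℝ) by norm_num, Real.rpow_natCast]
    rw [hrw, ← Real.sqrt_div h1δ'.le, ← Real.sqrt_mul (by norm_num : (0:ℝ) ≤ 3)]
    apply Real.sqrt_le_sqrt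
    rw [div_le_iff₀ hbpos]
    have key : 3 * ((1 + δ) / (1 - δ))^3 * ((1 - δ)^3 / (3*(1+δ))) = (1 + δ)^2 := by
      field_simp
    rw [key]
    nlinarith
  intro x hx
  have hE0 : (0 : ℝ) ≤ ∑ k, x k^2 := Finset.sum_nonneg fun k _ => sq_nonneg _
  have hL10 : 0 ≤ ∑ j, |A.mulVec x j| := Finset.sum_nonneg fun j _ => abs_nonneg _
  by_cases hEz : ∑ k, x k^2 = 0
  · have hx0 : ∀ k, x k = 0 := by
      intro k
      have h := (Finset.sum_eq_zero_iff_of_nonneg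
        (fun i _ => sq_nonneg (x i))).mp hEz k (Finset.mem_univ k)
      exact pow_eq_zero_iff two_ne_zero |>.mp h
    have hxf : x = 0 := funext hx0
    constructor
    · simp [hxf, Matrix.mulVec_zero]
    · simp [hxf, Matrix.mulVec_zero]
  have hEpos : 0 < ∑ k, x k^2 := lt_of_le_of_ne hE0 (Ne.symm hEz)
  have hsupp : (((Finset.univ.filter (fun k => x k ≠ 0)).card : ℝ)) ≤ s := by
    have hset : {k | x k ≠ 0} = ↑(Finset.univ.filter (fun k => x k ≠ 0)) := by ext k; simp
    rw [hset, Set.ncard_coe_finset] at hx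
    exact_mod_cast hx
  have hLE : (∑ k, |x k|)^2 ≤ s * ∑ k, x k^2 := by
    have h0 : ∑ k, |x k| = ∑ k ∈ Finset.univ.filter (fun k => x k ≠ 0), |x k| := by
      refine (Finset.sum_subset (Finset.filter_subset _ _) fun k _ hk => ?_).symm
      simp only [Finset.mem_filter, Finset.mem_univ, true_and, not_not] at hk
      simp [hk]
    rw [h0]
    calc (∑ k ∈ Finset.univ.filter (fun k => x k ≠ 0), |x k|)^2
        = (∑ k ∈ Finset.univ.filter (fun k => x k ≠ 0), 1 * |x k|)^2 := by simp
      _ ≤ (∑ k ∈ Finset.univ.filter (fun k => x k ≠ 0), 1^2)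
          * ∑ k ∈ Finset.univ.filter (fun k => x k ≠ 0), |x k|^2 :=
          Finset.sum_mul_sq_le_sq_mul_sq _ _ _
      _ = ((Finset.univ.filter (fun k => x k ≠ 0)).card : ℝ)
          * ∑ k ∈ Finset.univ.filter (fun k => x k ≠ 0), x k^2 := by simp [sq_abs]
      _ ≤ s * ∑ k, x k^2 := by
          refine mul_le_mul hsupp ?_ ?_ (Nat.cast_nonneg s)
          · exact Finset.sum_le_sum_of_subset_of_nonneg (Finset.filter_subset _ _)
              fun k _ _ => sq_nonneg _
          · exact Finset.sum_nonneg fun k _ => sq_nonneg _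
  have hs1 : (1:ℝ) ≤ s := by
    obtain ⟨k, hk⟩ : ∃ k, x k ≠ 0 := by
      by_contra h; push_neg at h
      exact hEz (Finset.sum_eq_zero fun k _ => by simp [h k])
    have h1 : 0 < (Finset.univ.filter (fun k => x k ≠ 0)).card :=
      Finset.card_pos.mpr ⟨k, by simp [hk]⟩
    have h2 : (1:ℝ) ≤ ((Finset.univ.filter (fun k => x k ≠ 0)).card : ℝ) := by
      exact_mod_cast h1
    linarith
  have hsm : κ * s^2 / δ ≤ Real.sqrt m := by
    rw [Real.le_sqrt (by positivity) (Nat.cast_nonneg m)]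
    have h1 : (κ * (s:ℝ)^2 / δ)^2 = κ^2/δ^2 * s^4 := by
      field_simp
    rw [h1]; exact hm
  have hsqrtm_pos : 0 < Real.sqrt m := by
    have h1 : (0:ℝ) < κ * s^2 / δ := by
      apply div_pos _ hδ0
      have hs2 : (1:ℝ) ≤ (s:ℝ)^2 := by nlinarith [hs1]
      nlinarith [hκ, hs2]
    linarith
  have hm0 : (0:ℝ) < m := Real.sqrt_pos.mp hsqrtm_pos
  have hsqm : Real.sqrt m * Real.sqrt m = (m:ℝ) := Real.mul_self_sqrt (Nat.cast_nonneg m)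
  have hms2 : κ * s^2 ≤ δ * Real.sqrt m := by
    rw [div_le_iff₀ hδ0] at hsm; linarith
  have hms1 : κ * s ≤ δ * Real.sqrt m := by
    nlinarith [mul_nonneg hκ.le (mul_nonneg (by linarith : (0:ℝ) ≤ (s:ℝ) - 1)
      (by linarith : (0:ℝ) ≤ (s:ℝ)))]
  -- ℓ₂ bounds
  have hQ2 := stmt10_Q2 A hA hκ.le ha x
  obtain ⟨hq1, hq2⟩ := abs_le.mp hQ2
  have hoff2 : κ * Real.sqrt m * (∑ k, |x k|)^2 ≤ δ * ((m:ℝ) * ∑ k, x k^2) := by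
    calc κ * Real.sqrt m * (∑ k, |x k|)^2
        ≤ κ * Real.sqrt m * ((s:ℝ) * ∑ k, x k^2) :=
          mul_le_mul_of_nonneg_left hLE (by positivity)
      _ = (κ * s) * (Real.sqrt m * ∑ k, x k^2) := by ring
      _ ≤ (δ * Real.sqrt m) * (Real.sqrt m * ∑ k, x k^2) :=
          mul_le_mul_of_nonneg_right hms1 (by positivity)
      _ = δ * ((Real.sqrt m * Real.sqrt m) * ∑ k, x k^2) := by ring
      _ = δ * ((m:ℝ) * ∑ k, x k^2) := by rw [hsqm]
  have hQ2low : (1-δ) * ((m:ℝ) * ∑ k, x k^2) ≤ ∑ j, (A.mulVec x j)^2 := by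
    nlinarith [hq1, hoff2]
  have hQ2high : ∑ j, (A.mulVec x j)^2 ≤ (1+δ) * ((m:ℝ) * ∑ k, x k^2) := by
    nlinarith [hq2, hoff2]
  -- ℓ₄ bound
  have hQ4 := stmt10_Q4 A hA hκ.le ha hb x
  have hL4 : (∑ k, |x k|)^4 ≤ (s:ℝ)^2 * (∑ k, x k^2)^2 := by
    nlinarith [mul_self_le_mul_self (sq_nonneg (∑ k, |x k|)) hLE]
  have hoff4 : κ * Real.sqrt m * (∑ k, |x k|)^4 ≤ δ * ((m:ℝ) * (∑ k, x k^2)^2) := by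
    calc κ * Real.sqrt m * (∑ k, |x k|)^4
        ≤ κ * Real.sqrt m * ((s:ℝ)^2 * (∑ k, x k^2)^2) :=
          mul_le_mul_of_nonneg_left hL4 (by positivity)
      _ = (κ * (s:ℝ)^2) * (Real.sqrt m * (∑ k, x k^2)^2) := by ring
      _ ≤ (δ * Real.sqrt m) * (Real.sqrt m * (∑ k, x k^2)^2) :=
          mul_le_mul_of_nonneg_right hms2 (by positivity)
      _ = δ * ((Real.sqrt m * Real.sqrt m) * (∑ k, x k^2)^2) := by ring
      _ = δ * ((m:ℝ) * (∑ k, x k^2)^2) := by rw [hsqm]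
  have hQ4' : ∑ j, (A.mulVec x j)^4 ≤ 3*(1+δ) * ((m:ℝ) * (∑ k, x k^2)^2) := by
    nlinarith [hQ4, hoff4, mul_nonneg hδ0.le (mul_nonneg hm0.le (sq_nonneg (∑ k, x k^2)))]
  -- Cauchy–Schwarz facts
  have cs1 : (∑ j, |A.mulVec x j|)^2 ≤ (m:ℝ) * ∑ j, (A.mulVec x j)^2 := by
    have h := Finset.sum_mul_sq_le_sq_mul_sq Finset.univ
      (fun _ : Fin m => (1:ℝ)) (fun j => |A.mulVec x j|)
    simpa [sq_abs] using h
  have cs2 : (∑ j, (A.mulVec x j)^2)^2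
      ≤ (∑ j, |A.mulVec x j|) * (∑ j, |A.mulVec x j|^3) := by
    have h := Finset.sum_mul_sq_le_sq_mul_sq Finset.univ
      (fun j => Real.sqrt |A.mulVec x j|) (fun j => Real.sqrt |A.mulVec x j| * |A.mulVec x j|)
    have e1 : ∀ j : Fin m,
        Real.sqrt |A.mulVec x j| * (Real.sqrt |A.mulVec x j| * |A.mulVec x j|)
          = (A.mulVec x j)^2 := fun j => by
      rw [← mul_assoc, Real.mul_self_sqrt (abs_nonneg _), abs_mul_abs_self, sq]
    have e2 : ∀ j : Fin m, (Real.sqrt |A.mulVec x j|)^2 = |A.mulVec x j| := fun j =>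
      Real.sq_sqrt (abs_nonneg _)
    have e3 : ∀ j : Fin m, (Real.sqrt |A.mulVec x j| * |A.mulVec x j|)^2
        = |A.mulVec x j|^3 := fun j => by
      rw [mul_pow, Real.sq_sqrt (abs_nonneg _)]; ring
    simp_rw [e1, e2, e3] at h
    exact h
  have cs3 : (∑ j, |A.mulVec x j|^3)^2
      ≤ (∑ j, (A.mulVec x j)^2) * ∑ j, (A.mulVec x j)^4 := by
    have h := Finset.sum_mul_sq_le_sq_mul_sq Finset.univ
      (fun j => |A.mulVec x j|) (fun j => (A.mulVec x j)^2)
    have e1 : ∀ j : Fin m, |A.mulVec x j| * (A.mulVec x j)^2 = |A.mulVec x j|^3 :=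
      fun j => by rw [← sq_abs]; ring
    have e2 : ∀ j : Fin m, |A.mulVec x j|^2 = (A.mulVec x j)^2 := fun j => sq_abs _
    have e3 : ∀ j : Fin m, ((A.mulVec x j)^2)^2 = (A.mulVec x j)^4 := fun j => by ring
    simp_rw [e1, e2, e3] at h
    exact h
  have hQ2pos : 0 < ∑ j, (A.mulVec x j)^2 := by
    have := mul_pos (mul_pos hm0 hEpos) h1δ
    nlinarith [hQ2low]
  have hkey : (∑ j, (A.mulVec x j)^2)^3
      ≤ (∑ j, |A.mulVec x j|)^2 * ∑ j, (A.mulVec x j)^4 := by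
    have t1 : ((∑ j, (A.mulVec x j)^2)^2) * ((∑ j, (A.mulVec x j)^2)^2)
        ≤ ((∑ j, |A.mulVec x j|) * (∑ j, |A.mulVec x j|^3))
          * ((∑ j, |A.mulVec x j|) * (∑ j, |A.mulVec x j|^3)) :=
      mul_self_le_mul_self (sq_nonneg _) cs2
    have t2 : (∑ j, |A.mulVec x j|)^2 * ((∑ j, |A.mulVec x j|^3)^2)
        ≤ (∑ j, |A.mulVec x j|)^2 * ((∑ j, (A.mulVec x j)^2) * ∑ j, (A.mulVec x j)^4) :=
      mul_le_mul_of_nonneg_left cs3 (sq_nonneg _)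
    have h4 : (∑ j, (A.mulVec x j)^2)^4
        ≤ ((∑ j, |A.mulVec x j|)^2 * ∑ j, (A.mulVec x j)^4) * ∑ j, (A.mulVec x j)^2 := by
      calc (∑ j, (A.mulVec x j)^2)^4
          = ((∑ j, (A.mulVec x j)^2)^2) * ((∑ j, (A.mulVec x j)^2)^2) := by ring
        _ ≤ ((∑ j, |A.mulVec x j|) * (∑ j, |A.mulVec x j|^3))
            * ((∑ j, |A.mulVec x j|) * (∑ j, |A.mulVec x j|^3)) := t1
        _ = (∑ j, |A.mulVec x j|)^2 * ((∑ j, |A.mulVec x j|^3)^2) := by ring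
        _ ≤ (∑ j, |A.mulVec x j|)^2 * ((∑ j, (A.mulVec x j)^2) * ∑ j, (A.mulVec x j)^4) := t2
        _ = ((∑ j, |A.mulVec x j|)^2 * ∑ j, (A.mulVec x j)^4) * ∑ j, (A.mulVec x j)^2 := by
            ring
    have h5 : (∑ j, (A.mulVec x j)^2)^3 * (∑ j, (A.mulVec x j)^2)
        ≤ ((∑ j, |A.mulVec x j|)^2 * ∑ j, (A.mulVec x j)^4) * ∑ j, (A.mulVec x j)^2 := by
      calc (∑ j, (A.mulVec x j)^2)^3 * (∑ j, (A.mulVec x j)^2)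
          = (∑ j, (A.mulVec x j)^2)^4 := by ring
        _ ≤ _ := h4
    exact le_of_mul_le_mul_right h5 hQ2pos
  have hQ4pos : 0 < ∑ j, (A.mulVec x j)^4 := by
    by_contra h; push_neg at h
    nlinarith [hkey, pow_pos hQ2pos 3, sq_nonneg (∑ j, |A.mulVec x j|), h]
  constructor
  · -- lower bound
    have hα2 : (Real.sqrt ((1-δ)^3/(3*(1+δ))))^2 = (1-δ)^3/(3*(1+δ)) := Real.sq_sqrt hbpos.le
    have hsE : Real.sqrt (∑ k, x k^2) ^2 = ∑ k, x k^2 := Real.sq_sqrt hE0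
    have step : (Real.sqrt ((1-δ)^3/(3*(1+δ))) * m * Real.sqrt (∑ k, x k^2))^2
        * ∑ j, (A.mulVec x j)^4 ≤ (∑ j, (A.mulVec x j)^2)^3 := by
      have expand : (Real.sqrt ((1-δ)^3/(3*(1+δ))) * m * Real.sqrt (∑ k, x k^2))^2
          = (1-δ)^3/(3*(1+δ)) * (m:ℝ)^2 * (∑ k, x k^2) := by
        rw [mul_pow, mul_pow, hα2, hsE]
      rw [expand]
      have u1 : (1-δ)^3/(3*(1+δ)) * (m:ℝ)^2 * (∑ k, x k^2) * ∑ j, (A.mulVec x j)^4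
          ≤ (1-δ)^3/(3*(1+δ)) * (m:ℝ)^2 * (∑ k, x k^2)
            * (3*(1+δ) * ((m:ℝ) * (∑ k, x k^2)^2)) :=
        mul_le_mul_of_nonneg_left hQ4' (by positivity)
      have u2 : (1-δ)^3/(3*(1+δ)) * (m:ℝ)^2 * (∑ k, x k^2)
          * (3*(1+δ) * ((m:ℝ) * (∑ k, x k^2)^2))
          = ((1-δ) * ((m:ℝ) * ∑ k, x k^2))^3 := by
        field_simp
      have u4 : ((1-δ) * ((m:ℝ) * ∑ k, x k^2))^3 ≤ (∑ j, (A.mulVec x j)^2)^3 :=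
        pow_le_pow_left₀ (by positivity) hQ2low 3
      linarith [u1, u2 ▸ u1]
    have final2 : (Real.sqrt ((1-δ)^3/(3*(1+δ))) * m * Real.sqrt (∑ k, x k^2))^2
        ≤ (∑ j, |A.mulVec x j|)^2 :=
      le_of_mul_le_mul_right (le_trans step hkey) hQ4pos
    have hnn : 0 ≤ Real.sqrt ((1-δ)^3/(3*(1+δ))) * m * Real.sqrt (∑ k, x k^2) := by positivity
    have := Real.sqrt_le_sqrt final2
    rwa [Real.sqrt_sq hnn, Real.sqrt_sq hL10] at this
  · -- upper bound
    have hβ2 : (Real.sqrt (1+δ))^2 = 1+δ := Real.sq_sqrt h1δ'.le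
    have hsE : Real.sqrt (∑ k, x k^2) ^2 = ∑ k, x k^2 := Real.sq_sqrt hE0
    have step : (∑ j, |A.mulVec x j|)^2
        ≤ (Real.sqrt (1+δ) * m * Real.sqrt (∑ k, x k^2))^2 := by
      have expand : (Real.sqrt (1+δ) * m * Real.sqrt (∑ k, x k^2))^2
          = (1+δ) * (m:ℝ)^2 * (∑ k, x k^2) := by
        rw [mul_pow, mul_pow, hβ2, hsE]
      rw [expand]
      have u1 : (m:ℝ) * ∑ j, (A.mulVec x j)^2 ≤ (m:ℝ) * ((1+δ) * ((m:ℝ) * ∑ k, x k^2)) :=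
        mul_le_mul_of_nonneg_left hQ2high (Nat.cast_nonneg m)
      nlinarith [cs1, u1]
    have hnn : 0 ≤ Real.sqrt (1+δ) * m * Real.sqrt (∑ k, x k^2) := by positivity
    have := Real.sqrt_le_sqrt step
    rwa [Real.sqrt_sq hL10, Real.sqrt_sq hnn] at this
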